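/- (Unbiasedness of the Block-Poisson estimator.) Fix λ ∈ ℕ⁺, a ∈ ℝ, and real numbers q_1, …, q_n with Q = exp(Σ_{i=1}^n q_i). For l = 1, …, λ let X_l be i.i.d. Poisson(1) random variables and let {D^{(h,l)} : h ≥ 1, 1 ≤ l ≤ λ} be i.i.d. integrable random variables with mean d = Σ_{i=1}^n d_i, all mutually independent. Define ξ_l = exp((a+λ)/λ) ∏_{h=1}^{X_l} (D^{(h,l)} − a)/λ and p̂_B = Q ∏_{l=1}^{λ} ξ_l. Then E[p̂_B] = Q e^{d} = exp( Σ_{i=1}^n (q_i + d_i) ). In particular, if q_i + d_i = ℓ_i are the log-likelihood contributions, p̂_B is an unbiased estimator of the likelihood p(y|θ) = exp(Σ_i ℓ_i). -/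

import Mathlib

set_option maxHeartbeats 1000000

open MeasureTheory ProbabilityTheory Finset
open scoped NNReal

/-- The value type of the joint family consisting of the Poisson block sizes
(`ℕ`-valued, indexed by `Fin lam`) and the mini-batch estimates (`ℝ`-valued, indexed by
`ℕ × Fin lam`). -/
def BPType (lam : ℕ) : Fin lam ⊕ (ℕ × Fin lam) → Type
  | .inl _ => ℕ
  | .inr _ => ℝ

instance (lam : ℕ) (i : Fin lam ⊕ (ℕ × Fin lam)) : MeasurableSpace (BPType lam i) := by
  cases i with
  | inl _ => exact inferInstanceAs (MeasurableSpace ℕ)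
  | inr _ => exact inferInstanceAs (MeasurableSpace ℝ)

/-- The joint family of random variables `X l` (block sizes) and `D h l`
(mini-batch estimates), viewed as a single indexed family. -/
def BPFun {Ω : Type*} {lam : ℕ} (X : Fin lam → Ω → ℕ) (D : ℕ → Fin lam → Ω → ℝ) :
    ∀ i : Fin lam ⊕ (ℕ × Fin lam), Ω → BPType lam i
  | .inl l => X l
  | .inr p => D p.1 p.2

/-- Expectation of a finite product of jointly independent integrable real random
variables factorizes, and the product is integrable. -/
lemma indep_prod_integral {Ω : Type*} [MeasurableSpace Ω] {P : Measure Ω}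
    [IsProbabilityMeasure P] {ι : Type*} {g : ι → Ω → ℝ}
    (hindep : iIndepFun g P)
    (hmeas : ∀ i, Measurable (g i)) (hint : ∀ i, Integrable (g i) P)
    (s : Finset ι) :
    Integrable (fun ω => ∏ i ∈ s, g i ω) P ∧
      ∫ ω, ∏ i ∈ s, g i ω ∂P = ∏ i ∈ s, ∫ ω, g i ω ∂P := by
  classical
  induction s using Finset.induction_on with
  | empty => simp
  | insert i t h ih =>
    have hfn : (∏ j ∈ t, g j) = fun ω => ∏ j ∈ t, g j ω := by
      funext ω; exact Finset.prod_apply ω t g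
    have hIF : IndepFun (∏ j ∈ t, g j) (g i) P :=
      hindep.indepFun_finsetProd_of_notMem hmeas h
    have hPint : Integrable (∏ j ∈ t, g j) P := hfn ▸ ih.1
    have heq : ((∏ j ∈ t, g j) * g i) = fun ω => ∏ j ∈ insert i t, g j ω := by
      funext ω
      simp [Finset.prod_insert h, Finset.prod_apply, mul_comm]
    constructor
    · have hmul : Integrable ((∏ j ∈ t, g j) * g i) P := hIF.integrable_mul hPint (hint i)
      exact heq ▸ hmul
    · have hmi := hIF.integral_mul_eq_mul_integral hPint.aestronglyMeasurable (hint i).aestronglyMeasurable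
      rw [heq] at hmi
      calc ∫ ω, ∏ j ∈ insert i t, g j ω ∂P
          = (∫ ω, (∏ j ∈ t, g j) ω ∂P) * ∫ ω, g i ω ∂P := hmi
        _ = (∏ j ∈ t, ∫ ω, g j ω ∂P) * ∫ ω, g i ω ∂P := by
            rw [hfn, ih.2]
        _ = ∏ j ∈ insert i t, ∫ ω, g j ω ∂P := by
            rw [Finset.prod_insert h, mul_comm]

/-- Fubini for products of an absolutely summable sequence over a finite power. -/
lemma pi_tsum_aux (v : ℕ → ℝ) (hv : Summable fun j => ‖v j‖) (m : ℕ) :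
    (Summable fun k : Fin m → ℕ => ‖∏ l, v (k l)‖) ∧
      (∑' k : Fin m → ℕ, ∏ l, v (k l)) = (∑' j, v j) ^ m := by
  induction m with
  | zero =>
    haveI : Unique (Fin 0 → ℕ) := ⟨⟨fun i => i.elim0⟩, fun f => funext fun i => i.elim0⟩
    constructor
    · exact ⟨_, hasSum_single default (fun b hb => absurd (Subsingleton.elim b default) hb)⟩
    · rw [pow_zero, tsum_eq_single default (fun b hb => absurd (Subsingleton.elim b default) hb)]
      simp
  | succ m ih =>
    have he : ∀ p : ℕ × (Fin m → ℕ),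
        (∏ l, v ((Fin.consEquiv fun _ => ℕ) p l)) = v p.1 * ∏ l, v (p.2 l) := by
      intro p
      rw [Fin.prod_univ_succ]
      simp [Fin.consEquiv, Fin.cons_zero, Fin.cons_succ]
    constructor
    · have h1 : Summable (fun p : ℕ × (Fin m → ℕ) => ‖v p.1 * ∏ l, v (p.2 l)‖) :=
        Summable.mul_norm (f := v) (g := fun k : Fin m → ℕ => ∏ l, v (k l)) hv ih.1
      have h2 : Summable ((fun k : Fin (m+1) → ℕ => ‖∏ l, v (k l)‖) ∘ (Fin.consEquiv fun _ => ℕ)) :=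
        h1.congr fun p => by simp only [Function.comp_apply, he p]
      exact (Fin.consEquiv fun _ => ℕ).summable_iff.mp h2
    · rw [← (Fin.consEquiv fun _ => ℕ).tsum_eq (fun k : Fin (m+1) → ℕ => ∏ l, v (k l))]
      calc ∑' p : ℕ × (Fin m → ℕ), ∏ l, v ((Fin.consEquiv fun _ => ℕ) p l)
          = ∑' p : ℕ × (Fin m → ℕ), v p.1 * ∏ l, v (p.2 l) := tsum_congr he
        _ = (∑' j, v j) * ∑' k : Fin m → ℕ, ∏ l, v (k l) :=
            (tsum_mul_tsum_of_summable_norm (f := v)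
              (g := fun k : Fin m → ℕ => ∏ l, v (k l)) hv ih.1).symm
        _ = (∑' j, v j) ^ (m+1) := by rw [ih.2, pow_succ, mul_comm]

/-- The per-coordinate test functions used to factorize the block-Poisson estimator:
an indicator of the block size value on `ℕ`-coordinates, and the shifted-scaled value
on `ℝ`-coordinates. -/
noncomputable def BPphi (lam : ℕ) (a : ℝ) (k : Fin lam → ℕ) :
    ∀ i : Fin lam ⊕ (ℕ × Fin lam), BPType lam i → ℝ
  | .inl l => fun x : ℕ => if x = k l then (1 : ℝ) else 0
  | .inr _ => fun x : ℝ => (x - a) / (lam : ℝ)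

lemma BPphi_meas (lam : ℕ) (a : ℝ) (k : Fin lam → ℕ) (i : Fin lam ⊕ (ℕ × Fin lam)) :
    Measurable (BPphi lam a k i) := by
  cases i with
  | inl l =>
    have h : Measurable (fun x : ℕ => if x = k l then (1 : ℝ) else 0) :=
      measurable_of_countable _
    exact h
  | inr p =>
    have h : Measurable (fun x : ℝ => (x - a) / (lam : ℝ)) :=
      (measurable_id.sub_const a).div_const _
    exact h

lemma BPphi_norm_meas (lam : ℕ) (a : ℝ) (k : Fin lam → ℕ) (i : Fin lam ⊕ (ℕ × Fin lam)) :
    Measurable (fun x => ‖BPphi lam a k i x‖) := (BPphi_meas lam a k i).norm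

theorem block_poisson_unbiased
    {Ω : Type*} [MeasurableSpace Ω] (P : Measure Ω) [IsProbabilityMeasure P]
    (lam : ℕ) (hlam : 0 < lam) (a : ℝ) (n : ℕ) (q di : Fin n → ℝ) (Q d : ℝ)
    (hQ : Q = Real.exp (∑ i, q i)) (hdsum : d = ∑ i, di i)
    (X : Fin lam → Ω → ℕ) (hX_meas : ∀ l, Measurable (X l))
    (hX_law : ∀ l, Measure.map (X l) P = poissonMeasure 1)
    (D : ℕ → Fin lam → Ω → ℝ) (hD_meas : ∀ h l, Measurable (D h l))
    (hD_int : ∀ h l, Integrable (D h l) P)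
    (hD_ident : ∀ h l h' l', IdentDistrib (D h l) (D h' l') P P)
    (hD_mean : ∀ h l, ∫ ω, D h l ω ∂P = d)
    (h_mutual_indep : iIndepFun (BPFun X D) P) :
    (∫ ω, Q * ∏ l : Fin lam,
        (Real.exp ((a + lam) / lam) *
          ∏ h ∈ Finset.range (X l ω), ((D h l ω - a) / lam)) ∂P
      = Q * Real.exp d) ∧
    Q * Real.exp d = Real.exp (∑ i, (q i + di i)) := by
  classical
  have hpart2 : Q * Real.exp d = Real.exp (∑ i, (q i + di i)) := by
    rw [hQ, hdsum, ← Real.exp_add, Finset.sum_add_distrib]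
  refine ⟨?_, hpart2⟩
  have hlamR : ((lam : ℝ)) ≠ 0 := Nat.cast_ne_zero.mpr hlam.ne'
  obtain ⟨l0⟩ : Nonempty (Fin lam) := ⟨⟨0, hlam⟩⟩
  -- the factorized family
  set g : (Fin lam → ℕ) → ∀ _ : Fin lam ⊕ ℕ × Fin lam, Ω → ℝ :=
    fun k i => BPphi lam a k i ∘ BPFun X D i with hgdef
  have hBP_meas : ∀ i, Measurable (BPFun X D i) := by
    rintro (l | p)
    · exact hX_meas l
    · exact hD_meas p.1 p.2
  have hg_indep : ∀ k, iIndepFun (g k) P :=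
    fun k => h_mutual_indep.comp (BPphi lam a k) (BPphi_meas lam a k)
  have hg_meas : ∀ k i, Measurable (g k i) :=
    fun k i => (BPphi_meas lam a k i).comp (hBP_meas i)
  -- explicit descriptions
  have hg_inl : ∀ k l, g k (Sum.inl l) = fun ω => if X l ω = k l then (1 : ℝ) else 0 := by
    intro k l; rfl
  have hg_inr : ∀ k (p : ℕ × Fin lam),
      g k (Sum.inr p) = fun ω => (D p.1 p.2 ω - a) / (lam : ℝ) := by
    intro k p; rfl
  -- integrability of the factors
  have hg_int : ∀ k i, Integrable (g k i) P := by
    rintro k (l | p)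
    · rw [hg_inl]
      have hind : (fun ω => if X l ω = k l then (1 : ℝ) else 0)
          = Set.indicator (X l ⁻¹' {k l}) (fun _ => (1 : ℝ)) := by
        funext ω
        simp [Set.indicator_apply, Set.mem_preimage]
      rw [hind]
      exact (integrable_const (1 : ℝ)).indicator ((hX_meas l) (measurableSet_singleton _))
    · rw [hg_inr]
      exact ((hD_int p.1 p.2).sub (integrable_const a)).div_const _
  -- values of the integrals
  set pp : ℕ → ℝ := fun j => Real.exp (-1) / (Nat.factorial j : ℝ) with hpp
  have hXint : ∀ (l : Fin lam) (j : ℕ),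
      ∫ ω, (if X l ω = j then (1 : ℝ) else 0) ∂P = pp j := by
    intro l j
    have hms : MeasurableSet (X l ⁻¹' {j}) := (hX_meas l) (measurableSet_singleton _)
    have hind : (fun ω => if X l ω = j then (1 : ℝ) else 0)
        = Set.indicator (X l ⁻¹' {j}) (fun _ => (1 : ℝ)) := by
      funext ω
      simp [Set.indicator_apply, Set.mem_preimage]
    rw [hind, integral_indicator_const (1 : ℝ) hms, smul_eq_mul, mul_one]
    have hmap : P (X l ⁻¹' {j}) = poissonMeasure 1 {j} := by
      rw [← hX_law l, Measure.map_apply (hX_meas l) (measurableSet_singleton _)]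
    rw [measureReal_def, hmap]
    have : poissonMeasure 1 {j} = ENNReal.ofReal (poissonPMFReal 1 j) := by
      rw [poissonMeasure_singleton]
      rfl
    rw [this, ENNReal.toReal_ofReal poissonPMFReal_nonneg, hpp]
    simp [poissonPMFReal]
  have hDint' : ∀ (h : ℕ) (l : Fin lam),
      ∫ ω, (D h l ω - a) / (lam : ℝ) ∂P = (d - a) / (lam : ℝ) := by
    intro h l
    rw [integral_div, integral_sub (hD_int h l) (integrable_const a), hD_mean h l,
      integral_const]
    simp
  set c' : ℝ := ∫ ω, ‖(D 0 l0 ω - a) / (lam : ℝ)‖ ∂P with hc'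
  have hc'_nonneg : 0 ≤ c' := integral_nonneg fun ω => norm_nonneg _
  have hDnorm : ∀ (h : ℕ) (l : Fin lam),
      ∫ ω, ‖(D h l ω - a) / (lam : ℝ)‖ ∂P = c' := by
    intro h l
    have hm : Measurable fun x : ℝ => ‖(x - a) / (lam : ℝ)‖ :=
      ((measurable_id.sub_const a).div_const _).norm
    exact ((hD_ident h l 0 l0).comp hm).integral_eq
  -- the finsets of relevant indices
  set T : (Fin lam → ℕ) → Finset (ℕ × Fin lam) :=
    fun k => Finset.univ.biUnion fun l => (Finset.range (k l)).image fun h => (h, l) with hT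
  set S : (Fin lam → ℕ) → Finset (Fin lam ⊕ ℕ × Fin lam) :=
    fun k => Finset.univ.disjSum (T k) with hS
  have hTdisj : ∀ k : Fin lam → ℕ, Set.PairwiseDisjoint (↑(Finset.univ : Finset (Fin lam)))
      (fun l => (Finset.range (k l)).image fun h => (h, l)) := by
    intro k l _ l' _ hne
    rw [Function.onFun, Finset.disjoint_left]
    rintro p hp hp'
    simp only [Finset.mem_image, Finset.mem_range] at hp hp'
    obtain ⟨h1, _, rfl⟩ := hp
    obtain ⟨h2, _, heq⟩ := hp'
    exact hne (congrArg Prod.snd heq).symm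
  have hinj : ∀ (k : Fin lam → ℕ) (l : Fin lam), ∀ x ∈ Finset.range (k l),
      ∀ y ∈ Finset.range (k l), (fun h => ((h, l) : ℕ × Fin lam)) x = (fun h => (h, l)) y
        → x = y := by
    intro k l x _ y _ hxy
    exact congrArg Prod.fst hxy
  -- product decomposition over S k, for an arbitrary "per-factor" function
  have hprod_split : ∀ (k : Fin lam → ℕ) (F : (Fin lam ⊕ ℕ × Fin lam) → ℝ),
      (∏ i ∈ S k, F i)
        = ∏ l, (F (Sum.inl l) * ∏ h ∈ Finset.range (k l), F (Sum.inr (h, l))) := by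
    intro k F
    rw [hS]
    rw [Finset.prod_disjSum, hT, Finset.prod_biUnion (hTdisj k), ← Finset.prod_mul_distrib]
    refine Finset.prod_congr rfl fun l _ => ?_
    rw [Finset.prod_image (hinj k l)]
  -- pointwise value of the product over S k
  have hHprod : ∀ (k : Fin lam → ℕ) (ω : Ω), (∏ i ∈ S k, g k i ω)
      = ∏ l, ((if X l ω = k l then (1 : ℝ) else 0) *
          ∏ h ∈ Finset.range (k l), ((D h l ω - a) / (lam : ℝ))) := by
    intro k ω
    exact hprod_split k (fun i => g k i ω)
  -- per-k integrability and expectations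
  have hHkey : ∀ k : Fin lam → ℕ, Integrable (fun ω => ∏ i ∈ S k, g k i ω) P ∧
      ∫ ω, ∏ i ∈ S k, g k i ω ∂P = ∏ i ∈ S k, ∫ ω, g k i ω ∂P :=
    fun k => indep_prod_integral (hg_indep k) (hg_meas k) (hg_int k) (S k)
  have hint_prod : ∀ k : Fin lam → ℕ, (∏ i ∈ S k, ∫ ω, g k i ω ∂P)
      = ∏ l, (pp (k l) * ((d - a) / (lam : ℝ)) ^ (k l)) := by
    intro k
    rw [hprod_split k (fun i => ∫ ω, g k i ω ∂P)]
    refine Finset.prod_congr rfl fun l _ => ?_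
    congr 1
    · rw [hg_inl]; exact hXint l (k l)
    · calc ∏ h ∈ Finset.range (k l), ∫ ω, g k (Sum.inr (h, l)) ω ∂P
          = ∏ _h ∈ Finset.range (k l), ((d - a) / (lam : ℝ)) :=
            Finset.prod_congr rfl fun h _ => by rw [hg_inr]; exact hDint' h l
        _ = ((d - a) / (lam : ℝ)) ^ (k l) := by
            rw [Finset.prod_const, Finset.card_range]
  -- norm version
  have hHnorm : ∀ k : Fin lam → ℕ,
      ∫ ω, ‖∏ i ∈ S k, g k i ω‖ ∂P = ∏ l, (pp (k l) * c' ^ (k l)) := by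
    intro k
    set g' : ∀ _ : Fin lam ⊕ ℕ × Fin lam, Ω → ℝ :=
      fun i => (fun x => ‖BPphi lam a k i x‖) ∘ BPFun X D i with hg'def
    have hg'_indep : iIndepFun g' P :=
      h_mutual_indep.comp (fun i x => ‖BPphi lam a k i x‖) (BPphi_norm_meas lam a k)
    have hg'_eq : ∀ i ω, g' i ω = ‖g k i ω‖ := fun i ω => rfl
    have hg'_meas : ∀ i, Measurable (g' i) := fun i => (hg_meas k i).norm
    have hg'_int : ∀ i, Integrable (g' i) P := fun i => (hg_int k i).norm
    have key := indep_prod_integral hg'_indep hg'_meas hg'_int (S k)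
    have hnorm_eq : (fun ω => ‖∏ i ∈ S k, g k i ω‖) = fun ω => ∏ i ∈ S k, g' i ω := by
      funext ω
      rw [Real.norm_eq_abs, Finset.abs_prod]
      exact Finset.prod_congr rfl fun i _ => (Real.norm_eq_abs _ ▸ (hg'_eq i ω).symm)
    rw [hnorm_eq, key.2, hprod_split k (fun i => ∫ ω, g' i ω ∂P)]
    refine Finset.prod_congr rfl fun l _ => ?_
    congr 1
    · have : (fun ω => g' (Sum.inl l) ω) = fun ω => if X l ω = k l then (1 : ℝ) else 0 := by
        funext ω
        rw [hg'_eq, hg_inl]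
        by_cases hc : X l ω = k l <;> simp [hc]
      rw [show ∫ ω, g' (Sum.inl l) ω ∂P = ∫ ω, (if X l ω = k l then (1 : ℝ) else 0) ∂P from by
        rw [← this]]
      exact hXint l (k l)
    · calc ∏ h ∈ Finset.range (k l), ∫ ω, g' (Sum.inr (h, l)) ω ∂P
          = ∏ _h ∈ Finset.range (k l), c' := by
            refine Finset.prod_congr rfl fun h _ => ?_
            have : (fun ω => g' (Sum.inr (h, l)) ω)
                = fun ω => ‖(D h l ω - a) / (lam : ℝ)‖ := by
              funext ω; rw [hg'_eq, hg_inr]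
            rw [show ∫ ω, g' (Sum.inr (h, l)) ω ∂P
              = ∫ ω, ‖(D h l ω - a) / (lam : ℝ)‖ ∂P from by rw [← this]]
            exact hDnorm h l
        _ = c' ^ (k l) := by rw [Finset.prod_const, Finset.card_range]
  -- pointwise identification of the estimator with the tsum
  have hpt : ∀ ω : Ω, (∑' k : Fin lam → ℕ, ∏ i ∈ S k, g k i ω)
      = ∏ l, ∏ h ∈ Finset.range (X l ω), ((D h l ω - a) / (lam : ℝ)) := by
    intro ω
    have h0 : ∀ k : Fin lam → ℕ, k ≠ (fun l => X l ω) → (∏ i ∈ S k, g k i ω) = 0 := by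
      intro k hk
      rw [hHprod k ω]
      obtain ⟨l, hl⟩ := Function.ne_iff.mp hk
      refine Finset.prod_eq_zero (Finset.mem_univ l) ?_
      rw [if_neg fun hxx => hl hxx.symm, zero_mul]
    rw [tsum_eq_single (fun l => X l ω) h0, hHprod]
    simp
  -- summability of the relevant sequences
  have hsummand : ∀ x : ℝ, Summable fun j => pp j * x ^ j := by
    intro x
    have h1 : Summable fun j : ℕ => Real.exp (-1) * (x ^ j / (Nat.factorial j : ℝ)) :=
      (Real.summable_pow_div_factorial x).mul_left _
    exact h1.congr fun j => by rw [hpp]; ring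
  have hpp_nonneg : ∀ j, 0 ≤ pp j := by
    intro j
    rw [hpp]
    positivity
  have hvnorm : ∀ x : ℝ, Summable fun j => ‖pp j * x ^ j‖ := by
    intro x
    have h1 : Summable fun j => pp j * |x| ^ j := hsummand |x|
    exact h1.congr fun j => by
      rw [norm_mul, Real.norm_eq_abs, abs_of_nonneg (hpp_nonneg j), Real.norm_eq_abs, abs_pow]
  -- the two instances of the pi-tsum lemma
  have A := pi_tsum_aux (fun j => pp j * ((d - a) / (lam : ℝ)) ^ j) (hvnorm _) lam
  have A' := pi_tsum_aux (fun j => pp j * c' ^ j) (hvnorm _) lam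
  -- swap integral and sum
  have hsum_int_norm : Summable fun k : Fin lam → ℕ => ∫ ω, ‖∏ i ∈ S k, g k i ω‖ ∂P := by
    have : (fun k : Fin lam → ℕ => ∫ ω, ‖∏ i ∈ S k, g k i ω‖ ∂P)
        = fun k => ∏ l, (pp (k l) * c' ^ (k l)) := funext hHnorm
    rw [this]
    exact A'.1.of_norm
  have hswap : ∫ ω, (∑' k : Fin lam → ℕ, ∏ i ∈ S k, g k i ω) ∂P
      = ∑' k : Fin lam → ℕ, ∫ ω, ∏ i ∈ S k, g k i ω ∂P :=
    (integral_tsum_of_summable_integral_norm (fun k => (hHkey k).1) hsum_int_norm).symm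
  -- single-sum value
  have hv_tsum : (∑' j, pp j * ((d - a) / (lam : ℝ)) ^ j)
      = Real.exp ((d - a) / (lam : ℝ) - 1) := by
    have h1 : ∀ j : ℕ, pp j * ((d - a) / (lam : ℝ)) ^ j
        = Real.exp (-1) * (((d - a) / (lam : ℝ)) ^ j / (Nat.factorial j : ℝ)) := by
      intro j; rw [hpp]; ring
    rw [tsum_congr h1, tsum_mul_left]
    have h2 : (∑' j : ℕ, ((d - a) / (lam : ℝ)) ^ j / (Nat.factorial j : ℝ))
        = Real.exp ((d - a) / (lam : ℝ)) := by
      rw [Real.exp_eq_exp_ℝ, NormedSpace.exp_eq_tsum_div]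
    rw [h2, ← Real.exp_add]
    congr 1
    ring
  -- main computation
  have hfun : (fun ω => Q * ∏ l : Fin lam,
        (Real.exp ((a + lam) / lam) *
          ∏ h ∈ Finset.range (X l ω), ((D h l ω - a) / lam)))
      = fun ω => (Q * Real.exp (a + lam)) *
          ∑' k : Fin lam → ℕ, ∏ i ∈ S k, g k i ω := by
    funext ω
    rw [hpt ω, Finset.prod_mul_distrib, Finset.prod_const, Finset.card_univ, Fintype.card_fin]
    have : Real.exp ((a + lam) / lam) ^ lam = Real.exp (a + lam) := by
      rw [← Real.exp_nat_mul]
      congr 1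
      field_simp
    rw [this]
    ring
  rw [hfun, integral_const_mul, hswap]
  have hsum_eq : (∑' k : Fin lam → ℕ, ∫ ω, ∏ i ∈ S k, g k i ω ∂P)
      = (∑' j, pp j * ((d - a) / (lam : ℝ)) ^ j) ^ lam := by
    rw [tsum_congr fun k => ((hHkey k).2).trans (hint_prod k)]
    exact A.2
  rw [hsum_eq, hv_tsum, ← Real.exp_nat_mul]
  have : (lam : ℝ) * ((d - a) / (lam : ℝ) - 1) = d - a - lam := by
    field_simp
  rw [this, mul_assoc, ← Real.exp_add]
  congr 1
  ring
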